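/- If (x₁⁰, ..., xₙ⁰) is a solution of the linear congruence a₁x₁ + ... + aₙxₙ ≡ b (mod m) with m ≠ 0, then the tuples (xᵢ⁰ + (m / gcd(aᵢ, m)) · tᵢ)ᵢ, as (t₁, ..., tₙ) ranges over ∏ᵢ {0, 1, ..., gcd(aᵢ, m) - 1}, give ∏ᵢ gcd(aᵢ, m) pairwise distinct solutions modulo m. -/

import Mathlib

theorem stmt_5 (n : ℕ) (a : Fin n → ℤ) (b m : ℤ) (hm : m ≠ 0)
    (x0 : Fin n → ℤ) (hx0 : (∑ i, a i * x0 i) ≡ b [ZMOD m]) :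
    (∀ t : Fin n → ℕ, (∀ i, t i < Int.gcd (a i) m) →
      (∑ i, a i * (x0 i + (m / Int.gcd (a i) m) * (t i : ℤ))) ≡ b [ZMOD m]) ∧
    (∀ t s : Fin n → ℕ, (∀ i, t i < Int.gcd (a i) m) → (∀ i, s i < Int.gcd (a i) m) →
      (∀ i, x0 i + (m / Int.gcd (a i) m) * (t i : ℤ) ≡
            x0 i + (m / Int.gcd (a i) m) * (s i : ℤ) [ZMOD m]) → t = s) := by
  have hg0 : ∀ i : Fin n, (Int.gcd (a i) m : ℤ) ≠ 0 := by
    intro i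
    exact_mod_cast (Int.gcd_pos_of_ne_zero_right _ hm).ne'
  have hmd : ∀ i : Fin n, ∃ d : ℤ, m = (Int.gcd (a i) m : ℤ) * d ∧
      m / (Int.gcd (a i) m : ℤ) = d := by
    intro i
    obtain ⟨d, hd⟩ := (Int.gcd_dvd_right (a i) m : (Int.gcd (a i) m : ℤ) ∣ m)
    refine ⟨d, hd, ?_⟩
    have h2 := Int.mul_ediv_cancel_left d (hg0 i)
    rw [← hd] at h2
    exact h2
  have hdvd : ∀ i : Fin n, (m : ℤ) ∣ a i * (m / Int.gcd (a i) m) := by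
    intro i
    obtain ⟨c, hc⟩ := (Int.gcd_dvd_left (a i) m : (Int.gcd (a i) m : ℤ) ∣ a i)
    obtain ⟨d, hd, hmg⟩ := hmd i
    refine ⟨c, ?_⟩
    rw [hmg]
    calc a i * d = (Int.gcd (a i) m : ℤ) * c * d := by rw [← hc]
      _ = ((Int.gcd (a i) m : ℤ) * d) * c := by ring
      _ = m * c := by rw [← hd]
  constructor
  · intro t ht
    have hdv : m ∣ (∑ i, a i * (x0 i + (m / Int.gcd (a i) m) * (t i : ℤ))) -
        (∑ i, a i * x0 i) := by
      rw [← Finset.sum_sub_distrib]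
      apply Finset.dvd_sum
      intro i _
      have e : a i * (x0 i + (m / Int.gcd (a i) m) * (t i : ℤ)) - a i * x0 i =
          a i * (m / Int.gcd (a i) m) * (t i : ℤ) := by ring
      rw [e]
      exact (hdvd i).mul_right _
    exact (Int.ModEq.symm (Int.modEq_iff_dvd.2 hdv)).trans hx0
  · intro t s ht hs h
    funext i
    obtain ⟨d, hd, hmg⟩ := hmd i
    have hdne : d ≠ 0 := by
      intro h0; rw [h0, mul_zero] at hd; exact hm hd
    have hdv : m ∣ d * ((t i : ℤ) - s i) := by
      have h2 := (Int.ModEq.dvd (h i))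
      have e : x0 i + m / Int.gcd (a i) m * (s i : ℤ) -
          (x0 i + m / Int.gcd (a i) m * (t i : ℤ)) = -(d * ((t i : ℤ) - s i)) := by
        rw [hmg]; ring
      rw [e] at h2
      exact dvd_neg.1 h2
    obtain ⟨k, hk⟩ := hdv
    rw [hd] at hk
    have hdiff : (t i : ℤ) - s i = (Int.gcd (a i) m : ℤ) * k := by
      apply mul_left_cancel₀ hdne
      linear_combination hk
    have habs : |(t i : ℤ) - s i| < (Int.gcd (a i) m : ℤ) := by
      have h1 := ht i; have h2 := hs i
      rw [abs_lt]; omega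
    have := Int.eq_zero_of_abs_lt_dvd ⟨k, hdiff⟩ habs
    omega
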